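/- Let p be a prime and τ ∈ Frac(Z_p[[T]]) of the form τ = p^k · g(T) with k ∈ Z and g(T) ∈ Z_p[[T]] \ p·Z_p[[T]]. Suppose τ converges and satisfies |τ(T₀)|_p < 1 for all T₀ ∈ C_p with |T₀|_p < 1 at which it is defined, and that τ has no poles on the open unit disc. Then k ≥ 0, i.e., τ ∈ Z_p[[T]], and moreover the constant term of τ lies in p·Z_p. -/

import Mathlib

/-- Let `τ = p^k·g(T)` with `k ∈ ℤ` and `g ∈ ℤ_p[[T]] \ p·ℤ_p[[T]]`.
If `|τ(T₀)|_p < 1` for all `T₀` in the open unit disc of `ℂ_p` (modelled by a complete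
ultrametric normed field `K` isometrically containing `ℚ_p` whose norms are dense in `(0,1)`),
then `k ≥ 0`, i.e. `τ ∈ ℤ_p[[T]]`, and the constant term of `τ` lies in `p·ℤ_p`. -/
theorem stmt_11 (p : ℕ) [Fact p.Prime]
    (K : Type*) [NormedField K] [CompleteSpace K] [IsUltrametricDist K]
    (σ : ℚ_[p] →+* K) (hσ : ∀ x : ℚ_[p], ‖σ x‖ = ‖x‖)
    (hdense : ∀ r : ℝ, 0 < r → r < 1 → ∃ x : K, r < ‖x‖ ∧ ‖x‖ < 1)
    (k : ℤ) (g : PowerSeries ℤ_[p])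
    (hg : ∃ n : ℕ, ‖PowerSeries.coeff n g‖ = 1)
    (hbound : ∀ T₀ : K, ‖T₀‖ < 1 →
      ‖(σ (p : ℚ_[p])) ^ k *
        ∑' n : ℕ, σ ((PowerSeries.coeff n g : ℤ_[p]) : ℚ_[p]) * T₀ ^ n‖ < 1) :
    0 ≤ k ∧
      ‖(p : ℚ_[p]) ^ k * ((PowerSeries.coeff 0 g : ℤ_[p]) : ℚ_[p])‖ ≤ ((p : ℝ))⁻¹ := by
  have hp1 : (1 : ℝ) < (p : ℝ) := by
    exact_mod_cast (Fact.out : p.Prime).one_lt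
  have hp0 : (0 : ℝ) < (p : ℝ) := lt_trans one_pos hp1
  set c : ℕ → ℤ_[p] := fun n => PowerSeries.coeff n g with hc
  have hnormσ : ∀ n : ℕ, ‖σ ((c n : ℤ_[p]) : ℚ_[p])‖ = ‖c n‖ := fun n => by
    rw [hσ, PadicInt.padic_norm_e_of_padicInt]
  have hnorm_le : ∀ n : ℕ, ‖σ ((c n : ℤ_[p]) : ℚ_[p])‖ ≤ 1 := fun n =>
    (hnormσ n).le.trans (PadicInt.norm_le_one _)
  have hσp : ‖σ (p : ℚ_[p])‖ = ((p : ℝ))⁻¹ := by rw [hσ]; exact Padic.norm_p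
  have hσpk : ‖(σ (p : ℚ_[p])) ^ k‖ = ((p : ℝ))⁻¹ ^ k := by rw [norm_zpow, hσp]
  -- Part 2: evaluate at 0
  have h0 : ‖(p : ℚ_[p]) ^ k * ((c 0 : ℤ_[p]) : ℚ_[p])‖ ≤ ((p : ℝ))⁻¹ := by
    have hb := hbound 0 (by simp)
    have ht : (∑' n : ℕ, σ ((c n : ℤ_[p]) : ℚ_[p]) * (0 : K) ^ n)
        = σ ((c 0 : ℤ_[p]) : ℚ_[p]) := by
      rw [tsum_eq_single 0 (fun n hn => by simp [zero_pow hn])]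
      simp
    rw [ht, norm_mul, hσpk, hnormσ] at hb
    have : ‖(p : ℚ_[p]) ^ k * ((c 0 : ℤ_[p]) : ℚ_[p])‖ < 1 := by
      rw [norm_mul, norm_zpow, Padic.norm_p, PadicInt.padic_norm_e_of_padicInt]
      exact hb
    have := (Padic.norm_le_pow_iff_norm_lt_pow_add_one
      ((p : ℚ_[p]) ^ k * ((c 0 : ℤ_[p]) : ℚ_[p])) (-1)).2 (by simpa using this)
    simpa using this
  refine ⟨?_, h0⟩
  -- Part 1: k ≥ 0
  by_contra hk
  push_neg at hk
  set n : ℕ := Nat.find hg with hndef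
  have hn : ‖c n‖ = 1 := Nat.find_spec hg
  have hmin : ∀ m, m < n → ‖c m‖ ≤ ((p : ℝ))⁻¹ := by
    intro m hm
    have h1 : ‖c m‖ < 1 := lt_of_le_of_ne (PadicInt.norm_le_one _) (Nat.find_min hg hm)
    have := (PadicInt.norm_le_pow_iff_norm_lt_pow_add_one (c m) (-1)).2 (by simpa using h1)
    simpa using this
  -- choose r ∈ (0,1) with r^n > p⁻¹
  obtain ⟨r, hr0, hr1, hrn⟩ : ∃ r : ℝ, 0 < r ∧ r < 1 ∧ ((p : ℝ))⁻¹ < r ^ n := by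
    refine ⟨((p : ℝ))⁻¹ ^ (((n : ℝ) + 1)⁻¹), ?_, ?_, ?_⟩
    · exact Real.rpow_pos_of_pos (by positivity) _
    · exact Real.rpow_lt_one (by positivity) (by simpa using inv_lt_one_of_one_lt₀ hp1)
        (by positivity)
    · rw [← Real.rpow_natCast (((p : ℝ))⁻¹ ^ (((n : ℝ) + 1)⁻¹)) n, ← Real.rpow_mul (by positivity)]
      nth_rewrite 1 [show ((p : ℝ))⁻¹ = ((p : ℝ))⁻¹ ^ (1 : ℝ) by rw [Real.rpow_one]]
      apply Real.rpow_lt_rpow_of_exponent_gt (by positivity)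
        (by simpa using inv_lt_one_of_one_lt₀ hp1)
      have h := (div_lt_one (show (0:ℝ) < (n:ℝ)+1 by positivity)).2
        (show (n:ℝ) < (n:ℝ)+1 by linarith)
      rw [div_eq_inv_mul] at h
      exact h
  obtain ⟨x, hxr, hx1⟩ := hdense r hr0 hr1
  have hx0 : 0 < ‖x‖ := lt_trans hr0 hxr
  have hxn : ((p : ℝ))⁻¹ < ‖x‖ ^ n := lt_of_lt_of_le hrn (pow_le_pow_left₀ hr0.le hxr.le n)
  set f : ℕ → K := fun m => σ ((c m : ℤ_[p]) : ℚ_[p]) * x ^ m with hf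
  have hfle : ∀ m, ‖f m‖ ≤ ‖x‖ ^ m := fun m => by
    rw [hf, norm_mul, norm_pow]
    exact mul_le_of_le_one_left (by positivity) (hnorm_le m)
  have hsum : Summable f :=
    Summable.of_norm_bounded (summable_geometric_of_lt_one hx0.le hx1) hfle
  -- tail bound
  set C : ℝ := max ((p : ℝ))⁻¹ (‖x‖ ^ (n + 1)) with hC
  have hCn : C < ‖x‖ ^ n :=
    max_lt hxn (pow_lt_pow_right_of_lt_one₀ hx0 hx1 (Nat.lt_succ_self n))
  have htail : ‖∑' m, if m = n then 0 else f m‖ ≤ C := by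
    apply IsUltrametricDist.norm_tsum_le_of_forall_le_of_nonneg
      (le_max_of_le_left (by positivity))
    intro m
    rcases eq_or_ne m n with rfl | hmn
    · rw [if_pos rfl, norm_zero]
      positivity
    · rw [if_neg hmn]
      rcases lt_or_gt_of_ne hmn with hlt | hgt
      · refine le_max_of_le_left ?_
        rw [hf, norm_mul, norm_pow, hnormσ]
        calc ‖c m‖ * ‖x‖ ^ m
            ≤ ((p : ℝ))⁻¹ * 1 :=
              mul_le_mul (hmin m hlt) (pow_le_one₀ hx0.le hx1.le)
                (by positivity) (by positivity)
          _ = ((p : ℝ))⁻¹ := mul_one _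
      · refine le_max_of_le_right ?_
        calc ‖f m‖ ≤ ‖x‖ ^ m := hfle m
          _ ≤ ‖x‖ ^ (n + 1) := pow_le_pow_of_le_one hx0.le hx1.le hgt
  have hfn : ‖f n‖ = ‖x‖ ^ n := by
    rw [hf, norm_mul, norm_pow, hnormσ, hn, one_mul]
  have hsplit : (∑' m, f m) = f n + ∑' m, if m = n then 0 else f m :=
    Summable.tsum_eq_add_tsum_ite hsum n
  have hne : ‖f n‖ ≠ ‖∑' m, if m = n then 0 else f m‖ := by
    rw [hfn]
    exact (lt_of_le_of_lt htail hCn).ne'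
  have hval : ‖∑' m, f m‖ = ‖x‖ ^ n := by
    rw [hsplit, IsUltrametricDist.norm_add_eq_max_of_norm_ne_norm hne, hfn]
    exact max_eq_left (htail.trans hCn.le)
  -- contradiction
  have hb := hbound x hx1
  rw [norm_mul, hσpk, hval] at hb
  have hk1 : (1 : ℤ) ≤ -k := by omega
  have hpow : (p : ℝ) ≤ ((p : ℝ))⁻¹ ^ k := by
    rw [inv_zpow, ← zpow_neg]
    calc (p : ℝ) = (p : ℝ) ^ (1 : ℤ) := (zpow_one _).symm
      _ ≤ (p : ℝ) ^ (-k) := zpow_le_zpow_right₀ hp1.le hk1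
  have : (1 : ℝ) < ((p : ℝ))⁻¹ ^ k * ‖x‖ ^ n := by
    calc (1 : ℝ) = (p : ℝ) * ((p : ℝ))⁻¹ := (mul_inv_cancel₀ hp0.ne').symm
      _ < ((p : ℝ))⁻¹ ^ k * ‖x‖ ^ n :=
          mul_lt_mul' hpow hxn (by positivity) (lt_of_lt_of_le hp0 hpow)
  linarith
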